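/- Let q ≥ 2 be an integer and let T be a (3^q − 2)-regular tree of order at least 7. Then T admits no (ℤ_3)^q-twin edge coloring, i.e. there is no proper edge labeling f : E(T) → (ℤ_3)^q such that the induced sums w(v) = Σ_{u ∈ N(v)} f(uv) are distinct on every pair of adjacent vertices. -/

import Mathlib

open Finset SimpleGraph

/-- A `𝒢`-twin edge coloring of `G`: a proper edge labeling `f : E(G) → 𝒢` such that
the induced weighted degrees `w(v) = ∑_{u ∈ N(v)} f(uv)` differ on adjacent vertices. -/
def IsTwinEdgeColoring {V : Type} [Fintype V] (G : SimpleGraph V) [DecidableRel G.Adj]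
    {A : Type} [AddCommGroup A] (f : Sym2 V → A) : Prop :=
  (∀ u v w : V, G.Adj u v → G.Adj u w → v ≠ w → f s(u, v) ≠ f s(u, w)) ∧
  (∀ u v : V, G.Adj u v →
    ∑ x ∈ G.neighborFinset u, f s(x, u) ≠ ∑ x ∈ G.neighborFinset v, f s(x, v))

/-- The set of integers `k ≥ 2` such that for every Abelian group `𝒢` of order `k`
there exists a `𝒢`-twin edge coloring of `G`.  The group twin chromatic index
`χ'_g(G)` is the least element of this set. -/
def TwinSet {V : Type} [Fintype V] (G : SimpleGraph V) [DecidableRel G.Adj] : Set ℕ :=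
  {k | 2 ≤ k ∧ ∀ (A : Type) [AddCommGroup A] [Fintype A], Fintype.card A = k →
      ∃ f : Sym2 V → A, IsTwinEdgeColoring G f}


/-- A tree is `r`-regular if every non-leaf vertex has degree `r`. -/
def IsRegularTreeDeg {V : Type} [Fintype V] (G : SimpleGraph V) [DecidableRel G.Adj]
    (r : ℕ) : Prop :=
  ∀ v : V, G.degree v ≠ 1 → G.degree v = r

/-- For an integer `q ≥ 2`, a `(3^q - 2)`-regular tree of order at least `7` admits
no `(ℤ₃)^q`-twin edge coloring. -/
theorem no_twin_coloring_of_regular_tree {V : Type} [Fintype V] (T : SimpleGraph V)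
    [DecidableRel T.Adj] (hT : T.IsTree) (hcard : 7 ≤ Fintype.card V)
    (q : ℕ) (hq : 2 ≤ q) (hreg : IsRegularTreeDeg T (3 ^ q - 2)) :
    ¬ ∃ f : Sym2 V → (Fin q → ZMod 3), IsTwinEdgeColoring T f := by
  rintro ⟨f, hprop, hw⟩
  classical
  have h3 : ∀ a : Fin q → ZMod 3, a + a + a = 0 := by
    intro a; funext i
    have : ∀ z : ZMod 3, z + z + z = 0 := by decide
    exact this (a i)
  have hcardA : Fintype.card (Fin q → ZMod 3) = 3 ^ q := by
    simp [ZMod.card]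
  have h3q : 9 ≤ 3 ^ q := by
    calc (9 : ℕ) = 3 ^ 2 := by norm_num
    _ ≤ 3 ^ q := Nat.pow_le_pow_right (by norm_num) hq
  have hsumA : ∑ x : (Fin q → ZMod 3), x = 0 := by
    set s := ∑ x : (Fin q → ZMod 3), x with hs
    have hneg : s = -s := by
      have : s = ∑ x : (Fin q → ZMod 3), -x := by
        rw [hs]
        exact Fintype.sum_equiv (Equiv.neg (Fin q → ZMod 3)) _ _ (fun x => (neg_neg x).symm)
      rw [Finset.sum_neg_distrib] at this
      exact this
    have h2 : s + s = 0 := by nth_rewrite 1 [hneg]; exact neg_add_cancel s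
    have h3s : s + s + s = 0 := h3 s
    have hfin : s = s + s + s - (s + s) := by abel
    rw [show s + s + s = 0 from h3s, h2] at hfin; simpa using hfin
  set w : V → (Fin q → ZMod 3) := fun v => ∑ x ∈ T.neighborFinset v, f s(x, v) with hwdef
  -- star lemma
  have key : ∀ v : V, T.degree v ≠ 1 → ∃ u, T.Adj v u ∧ f s(v, u) = w v := by
    intro v hv
    have hdeg : T.degree v = 3 ^ q - 2 := hreg v hv
    set S : Finset (Fin q → ZMod 3) := (T.neighborFinset v).image (fun u => f s(v, u)) with hS
    have hinj : ∀ x ∈ T.neighborFinset v, ∀ y ∈ T.neighborFinset v,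
        f s(v, x) = f s(v, y) → x = y := by
      intro x hx y hy hxy
      by_contra hne
      exact hprop v x y ((T.mem_neighborFinset _ _).mp hx) ((T.mem_neighborFinset _ _).mp hy) hne hxy
    have hScard : S.card = 3 ^ q - 2 := by
      rw [hS, Finset.card_image_of_injOn hinj, T.card_neighborFinset_eq_degree, hdeg]
    have hCcard : Sᶜ.card = 2 := by
      rw [Finset.card_compl, hScard, hcardA]; omega
    obtain ⟨a, b, hab, hC⟩ := Finset.card_eq_two.mp hCcard
    have hsumS : ∑ x ∈ S, x = -(a + b) := by
      have h1 : (∑ x ∈ S, x) + ∑ x ∈ Sᶜ, x = ∑ x : (Fin q → ZMod 3), x := Finset.sum_add_sum_compl S _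
      rw [hC, Finset.sum_pair hab, hsumA] at h1
      exact eq_neg_of_add_eq_zero_left h1
    have hwv : w v = ∑ x ∈ S, x := by
      show (∑ x ∈ T.neighborFinset v, f s(x, v)) = ∑ x ∈ S, x
      rw [hS, Finset.sum_image hinj]
      exact Finset.sum_congr rfl fun u _ => by rw [Sym2.eq_swap]
    have hmem : w v ∈ S := by
      by_contra hns
      have hmemc : w v ∈ Sᶜ := Finset.mem_compl.mpr hns
      rw [hC, Finset.mem_insert, Finset.mem_singleton] at hmemc
      rcases hmemc with h | h
      · rw [hwv, hsumS] at h
        exact hab (by have h3a := h3 a; linear_combination h3a + h)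
      · rw [hwv, hsumS] at h
        exact hab (by have h3b := h3 b; linear_combination -h3b - h)
    rw [hS, Finset.mem_image] at hmem
    obtain ⟨u, hu, hfu⟩ := hmem
    exact ⟨u, (T.mem_neighborFinset _ _).mp hu, hfu⟩
  -- successor function
  have key' : ∀ v : V, ∃ u, T.degree v ≠ 1 → T.Adj v u ∧ f s(v, u) = w v := by
    intro v
    by_cases h : T.degree v ≠ 1
    · obtain ⟨u, hu⟩ := key v h; exact ⟨u, fun _ => hu⟩
    · exact ⟨v, fun h' => absurd h' h⟩
  choose g hg using key'
  have hgadj : ∀ v, T.degree v ≠ 1 → T.Adj v (g v) := fun v h => (hg v h).1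
  have hglab : ∀ v, T.degree v ≠ 1 → f s(v, g v) = w v := fun v h => (hg v h).2
  have hwne : ∀ u v, T.Adj u v → w u ≠ w v := fun u v h => hw u v h
  have hgint : ∀ v, T.degree v ≠ 1 → T.degree (g v) ≠ 1 := by
    intro v hv hdeg1
    have hadj := hgadj v hv
    have hmem : v ∈ T.neighborFinset (g v) := (T.mem_neighborFinset _ _).mpr hadj.symm
    have hsingle : T.neighborFinset (g v) = {v} := by
      apply Finset.eq_singleton_iff_unique_mem.mpr
      refine ⟨hmem, fun y hy => ?_⟩
      by_contra hne
      have hc := T.card_neighborFinset_eq_degree (g v)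
      rw [hdeg1] at hc
      have := Finset.one_lt_card.mpr ⟨y, hy, v, hmem, hne⟩
      omega
    have hwu : w (g v) = f s(v, g v) := by
      show (∑ x ∈ T.neighborFinset (g v), f s(x, g v)) = f s(v, g v)
      rw [hsingle, Finset.sum_singleton, Sym2.eq_swap]
    exact hwne v (g v) hadj (hwu.trans (hglab v hv)).symm
  have hgg : ∀ v, T.degree v ≠ 1 → g (g v) ≠ v := by
    intro v hv hggv
    have h1 : f s(g v, g (g v)) = w (g v) := hglab (g v) (hgint v hv)
    rw [hggv] at h1
    have h2 : f s(g v, v) = w v := by rw [Sym2.eq_swap]; exact hglab v hv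
    exact hwne v (g v) (hgadj v hv) (h2.symm.trans h1)
  -- internal vertex exists
  obtain ⟨v0, hv0⟩ : ∃ v : V, T.degree v ≠ 1 ∧ 2 ≤ T.degree v := by
    by_contra hno
    push_neg at hno
    have hle : ∀ v : V, T.degree v ≤ 1 := by
      intro v
      by_cases h : T.degree v = 1
      · omega
      · have := hno v h; omega
    have hsum : ∑ v : V, T.degree v ≤ Fintype.card V := by
      calc ∑ v : V, T.degree v ≤ ∑ _v : V, 1 := Finset.sum_le_sum fun v _ => hle v
      _ = Fintype.card V := by simp
    rw [T.sum_degrees_eq_twice_card_edges] at hsum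
    have hedge := hT.card_edgeFinset
    omega
  -- iterates stay internal
  have hint : ∀ (n : ℕ) (u : V), T.degree u ≠ 1 → T.degree (g^[n] u) ≠ 1 := by
    intro n
    induction n with
    | zero => intro u hu; exact hu
    | succ n ih =>
      intro u hu
      rw [Function.iterate_succ_apply']
      exact hgint _ (ih u hu)
  -- pigeonhole
  obtain ⟨m, n, hmn, hxy⟩ := Finite.exists_ne_map_eq_of_infinite (fun i : ℕ => g^[i] v0)
  wlog hlt : m < n generalizing m n
  · exact this n m (Ne.symm hmn) hxy.symm (by omega)
  obtain ⟨v, hvint, hPex⟩ :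
      ∃ v, T.degree v ≠ 1 ∧ ∃ k0, 0 < k0 ∧ g^[k0] v = v := by
    refine ⟨g^[m] v0, hint m v0 hv0.1, n - m, by omega, ?_⟩
    rw [← Function.iterate_add_apply, show n - m + m = n from by omega]
    exact hxy.symm
  obtain ⟨k, ⟨hkpos, hkper⟩, hkmin⟩ :
      ∃ k, (0 < k ∧ g^[k] v = v) ∧ ∀ j, 0 < j → g^[j] v = v → k ≤ j :=
    ⟨Nat.find hPex, Nat.find_spec hPex, fun j h1 h2 => Nat.find_le ⟨h1, h2⟩⟩
  have hyint : ∀ i, T.degree (g^[i] v) ≠ 1 := fun i => hint i v hvint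
  have hyadj : ∀ i, T.Adj (g^[i] v) (g^[i + 1] v) := by
    intro i
    rw [Function.iterate_succ_apply']
    exact hgadj _ (hyint i)
  -- distinctness
  have hdist : ∀ s t, s < k → t < k → g^[s] v = g^[t] v → s = t := by
    have aux : ∀ s t, s < t → t < k → g^[s] v ≠ g^[t] v := by
      intro s t hst htk heq
      have h1 : g^[k - t] (g^[t] v) = v := by
        rw [← Function.iterate_add_apply, show k - t + t = k from by omega]
        exact hkper
      have h2 : g^[k - t + s] v = v := by
        rw [Function.iterate_add_apply, heq, h1]
      have := hkmin (k - t + s) (by omega) h2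
      omega
    intro s t hsk htk heq
    rcases lt_trichotomy s t with h | h | h
    · exact absurd heq (aux s t h htk)
    · exact h
    · exact absurd heq.symm (aux t s h hsk)
  -- k ≥ 3
  have hk1 : k ≠ 1 := by
    intro h
    have h1 : g v = v := by
      have := hkper; rw [h, Function.iterate_one] at this; exact this
    have := hgadj v hvint
    rw [h1] at this
    exact T.loopless.irrefl v this
  have hk2 : k ≠ 2 := by
    intro h
    have h2 : g (g v) = v := by
      have := hkper
      rw [h, show (2:ℕ) = 1 + 1 from rfl, Function.iterate_add_apply,
        Function.iterate_one] at this
      exact this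
    exact hgg v hvint h2
  have hk3 : 3 ≤ k := by omega
  -- build the walk along the orbit
  have exists_walk : ∀ (z : ℕ → V), (∀ i, T.Adj (z i) (z (i + 1))) → ∀ (n : ℕ),
      ∃ p : T.Walk (z 0) (z n), p.support = (List.range (n + 1)).map z ∧
        p.edges = (List.range n).map (fun i => s(z i, z (i + 1))) := by
    intro z hz n
    induction n with
    | zero => exact ⟨Walk.nil, by simp [List.range_succ], by simp⟩
    | succ n ih =>
      obtain ⟨p, hs, he⟩ := ih
      refine ⟨p.concat (hz n), ?_, ?_⟩
      · rw [Walk.support_concat, hs]; simp [List.range_succ]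
      · rw [Walk.edges_concat, he]; simp [List.range_succ]
  obtain ⟨p0, hsup, hedg⟩ :=
    exists_walk (fun i => g^[i + 1] v) (fun i => hyadj (i + 1)) (k - 1)
  have hend : (fun i => g^[i + 1] v) (k - 1) = v := by
    show g^[k - 1 + 1] v = v
    rw [show k - 1 + 1 = k from by omega]; exact hkper
  set p : T.Walk (g^[1] v) v := p0.copy rfl hend with hp
  have hinj2 : ∀ i j, i < k → j < k → g^[i + 1] v = g^[j + 1] v → i = j := by
    intro i j hik hjk heq
    by_cases hi : i + 1 = k
    · by_cases hj : j + 1 = k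
      · omega
      · exfalso
        have hvv : g^[j + 1] v = g^[0] v := by rw [← heq, hi, hkper]; rfl
        have := hdist (j + 1) 0 (by omega) (by omega) hvv
        omega
    · by_cases hj : j + 1 = k
      · exfalso
        have hvv : g^[i + 1] v = g^[0] v := by rw [heq, hj, hkper]; rfl
        have := hdist (i + 1) 0 (by omega) (by omega) hvv
        omega
      · have := hdist (i + 1) (j + 1) (by omega) (by omega) heq; omega
  have hppath : p.IsPath := by
    rw [Walk.isPath_def, hp, Walk.support_copy, hsup,
      show k - 1 + 1 = k from by omega]
    apply List.Nodup.map_on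
    · intro i hi j hj hij
      rw [List.mem_range] at hi hj
      exact hinj2 i j hi hj hij
    · exact List.nodup_range
  have hadj01 : T.Adj v (g^[1] v) := hyadj 0
  have hnotedge : s(v, g^[1] v) ∉ p.edges := by
    rw [hp, Walk.edges_copy, hedg]
    intro hmem
    rw [List.mem_map] at hmem
    obtain ⟨i, hi, heq⟩ := hmem
    rw [List.mem_range] at hi
    rw [Sym2.eq_iff] at heq
    rcases heq with ⟨h1, h2⟩ | ⟨h1, h2⟩
    · -- g^[i+1] v = v
      have hvv : g^[i + 1] v = g^[0] v := by rw [h1]; rfl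
      have := hdist (i + 1) 0 (by omega) (by omega) hvv
      omega
    · -- g^[i+1] v = g^[1] v and g^[i+1+1] v = v
      have hi0 : i + 1 = 1 := hdist (i + 1) 1 (by omega) (by omega) h1
      have hi0' : i = 0 := by omega
      subst hi0'
      have hvv : g^[0 + 1 + 1] v = g^[0] v := by rw [h2]; rfl
      have := hdist (0 + 1 + 1) 0 (by omega) (by omega) hvv
      omega
  have hcyc : (Walk.cons hadj01 (p : T.Walk (g^[1] v) v)).IsCycle :=
    SimpleGraph.Path.cons_isCycle ⟨p, hppath⟩ hadj01 hnotedge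
  exact hT.IsAcyclic _ hcyc
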